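/- Fix an integer d ≥ 1. For θ = (θ_0, θ_1, θ_2, θ_3, θ_4) ∈ (ℂ^d)^5 and r = (r_0, …, r_4) ∈ ℂ^5, set c^i(t) = r_i·∏_{j=1}^d (t − θ_i^j) (i = 0,…,4) and h(t) = c^1(t)c^2(t) + c^3(t)c^4(t). Define G' : (ℂ^d)^5 × ℂ^5 → ℂ^{3d} × ℂ^5 × ℂ^{2d} by G'(θ, r) = (θ_0, θ_1, θ_2, r_0, …, r_4, (coeff_0(h), …, coeff_{2d−1}(h))), i.e. all coefficients of h except the leading one. Suppose the point (θ̃, y) satisfies: y_i ≠ 0 for all i; the 5d numbers θ̃_i^j are pairwise distinct; y_1y_2 + y_3y_4 ≠ 0 (so h has degree 2d); h has 2d pairwise distinct roots β_1, …, β_{2d}, all nonzero, none of which is a root of c^3 or of c^4; and c^3, c^4 are not proportional over ℂ. Then the Fréchet derivative over ℂ of G' at (θ̃, y) is a ℂ-linear isomorphism of ℂ^{5d+5}. -/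

import Mathlib

open Polynomial

noncomputable section Stmt2Aux

variable {d : ℕ}

/-- abbreviation for the domain -/
abbrev EEs (d : ℕ) := (Fin 5 → Fin d → ℂ) × (Fin 5 → ℂ)

def dPaux (x δ : Fin d → ℂ) : ℂ[X] :=
  ∑ j, C (δ j) * ∏ m ∈ Finset.univ.erase j, (X - C (x m))

def cAux (p : EEs d) (i : Fin 5) : ℂ[X] := C (p.2 i) * ∏ j, (X - C (p.1 i j))

def dcAux (p : EEs d) (i : Fin 5) (v : EEs d) : ℂ[X] :=
  C (v.2 i) * ∏ j, (X - C (p.1 i j)) - C (p.2 i) * dPaux (p.1 i) (v.1 i)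

def dHAux (p v : EEs d) : ℂ[X] :=
  dcAux p 1 v * cAux p 2 + cAux p 1 * dcAux p 2 v +
    (dcAux p 3 v * cAux p 4 + cAux p 3 * dcAux p 4 v)

lemma dPaux_add (x : Fin d → ℂ) (δ δ' : Fin d → ℂ) :
    dPaux x (δ + δ') = dPaux x δ + dPaux x δ' := by
  simp [dPaux, C_add, add_mul, Finset.sum_add_distrib]

lemma dPaux_smul (x : Fin d → ℂ) (a : ℂ) (δ : Fin d → ℂ) :
    dPaux x (a • δ) = a • dPaux x δ := by
  simp [dPaux, C_mul, smul_eq_C_mul, Finset.mul_sum, mul_assoc]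

lemma dPaux_zero (x : Fin d → ℂ) : dPaux x 0 = 0 := by simp [dPaux]

lemma dcAux_add (p : EEs d) (i : Fin 5) (v w : EEs d) :
    dcAux p i (v + w) = dcAux p i v + dcAux p i w := by
  show C (v.2 i + w.2 i) * _ - C (p.2 i) * dPaux (p.1 i) (v.1 i + w.1 i) = _
  rw [dPaux_add, C_add]
  unfold dcAux
  ring

lemma dcAux_smul (p : EEs d) (i : Fin 5) (a : ℂ) (v : EEs d) :
    dcAux p i (a • v) = a • dcAux p i v := by
  show C (a * v.2 i) * _ - C (p.2 i) * dPaux (p.1 i) (a • v.1 i) = _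
  rw [dPaux_smul, C_mul]
  unfold dcAux
  rw [smul_eq_C_mul, smul_eq_C_mul]
  ring

lemma dHAux_add (p : EEs d) (v w : EEs d) :
    dHAux p (v + w) = dHAux p v + dHAux p w := by
  unfold dHAux
  rw [dcAux_add, dcAux_add, dcAux_add, dcAux_add]
  ring

lemma dHAux_smul (p : EEs d) (a : ℂ) (v : EEs d) :
    dHAux p (a • v) = a • dHAux p v := by
  unfold dHAux
  rw [dcAux_smul, dcAux_smul, dcAux_smul, dcAux_smul]
  rw [smul_eq_C_mul, smul_eq_C_mul, smul_eq_C_mul, smul_eq_C_mul, smul_eq_C_mul]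
  ring

lemma hasFDerivAt_prodcoeff (s : Finset (Fin d)) (k : ℕ) (x : Fin d → ℂ) :
    HasFDerivAt (fun z : Fin d → ℂ => (∏ j ∈ s, (X - C (z j))).coeff k)
      (∑ j ∈ s, (-(∏ m ∈ s.erase j, (X - C (x m))).coeff k) •
        (ContinuousLinearMap.proj j : (Fin d → ℂ) →L[ℂ] ℂ)) x := by
  induction s using Finset.induction_on generalizing k with
  | empty => simpa using hasFDerivAt_const ((1 : ℂ[X]).coeff k) x
  | @insert a s ha ih =>
    have hproj : HasFDerivAt (fun x : Fin d → ℂ => x a)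
        (ContinuousLinearMap.proj a : (Fin d → ℂ) →L[ℂ] ℂ) x :=
      (ContinuousLinearMap.proj a : (Fin d → ℂ) →L[ℂ] ℂ).hasFDerivAt
    have hX : HasFDerivAt (fun x : Fin d → ℂ => (X * ∏ j ∈ s, (X - C (x j))).coeff k)
        (∑ j ∈ s, (-(X * ∏ m ∈ s.erase j, (X - C (x m))).coeff k) •
          (ContinuousLinearMap.proj j : (Fin d → ℂ) →L[ℂ] ℂ)) x := by
      rcases k with _ | m
      · simp only [coeff_X_mul_zero, neg_zero]
        have hz : (∑ j ∈ s, (0 : ℂ) •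
            (ContinuousLinearMap.proj j : (Fin d → ℂ) →L[ℂ] ℂ)) = 0 :=
          by ext v; simp
        rw [hz]
        exact hasFDerivAt_const (0 : ℂ) x
      · simp only [coeff_X_mul]
        exact ih m
    have hmul := hproj.mul (ih k)
    have this1 := hX.sub hmul
    have hfun : (fun x : Fin d → ℂ => (∏ j ∈ insert a s, (X - C (x j))).coeff k) =
        fun x : Fin d → ℂ => (X * ∏ j ∈ s, (X - C (x j))).coeff k -
          x a * (∏ j ∈ s, (X - C (x j))).coeff k := by
      funext x
      rw [Finset.prod_insert ha, sub_mul, coeff_sub, coeff_C_mul]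
    rw [hfun]
    refine this1.congr_fderiv ?_
    ext δ
    simp only [ContinuousLinearMap.sum_apply, ContinuousLinearMap.smul_apply,
      ContinuousLinearMap.proj_apply, ContinuousLinearMap.sub_apply,
      ContinuousLinearMap.add_apply, Finset.sum_insert ha, smul_eq_mul,
      Finset.erase_insert ha]
    have hterm : ∀ j ∈ s, -(∏ m ∈ (insert a s).erase j, (X - C (x m))).coeff k * δ j
        = -(X * ∏ m ∈ s.erase j, (X - C (x m))).coeff k * δ j -
          x a * (-(∏ m ∈ s.erase j, (X - C (x m))).coeff k * δ j) := by
      intro j hj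
      have hne : a ≠ j := fun h => ha (h ▸ hj)
      rw [Finset.erase_insert_of_ne hne,
        Finset.prod_insert (fun h => ha (Finset.mem_of_mem_erase h)),
        sub_mul, coeff_sub, coeff_C_mul]
      ring
    rw [Finset.sum_congr rfl hterm, Finset.sum_sub_distrib]
    have h2 : ∀ j ∈ s, x a * (-(∏ m ∈ s.erase j, (X - C (x m))).coeff k * δ j)
        = -(x a * (∏ m ∈ s.erase j, (X - C (x m))).coeff k) * δ j := fun j _ => by ring
    rw [Finset.mul_sum, Finset.sum_congr rfl h2]
    ring

def dcL (p : EEs d) (i : Fin 5) (k : ℕ) : EEs d →ₗ[ℂ] ℂ where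
  toFun v := (dcAux p i v).coeff k
  map_add' v w := by
    show (dcAux p i (v + w)).coeff k = _
    rw [dcAux_add, coeff_add]
  map_smul' a v := by
    show (dcAux p i (a • v)).coeff k = _
    rw [dcAux_smul, coeff_smul]
    simp

def dmulL (p : EEs d) (a b : Fin 5) (k : ℕ) : EEs d →ₗ[ℂ] ℂ where
  toFun v := (dcAux p a v * cAux p b + cAux p a * dcAux p b v).coeff k
  map_add' v w := by
    show (dcAux p a (v + w) * cAux p b + cAux p a * dcAux p b (v + w)).coeff k = _
    rw [dcAux_add, dcAux_add,
      show (dcAux p a v + dcAux p a w) * cAux p b + cAux p a * (dcAux p b v + dcAux p b w)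
        = (dcAux p a v * cAux p b + cAux p a * dcAux p b v) +
          (dcAux p a w * cAux p b + cAux p a * dcAux p b w) from by ring, coeff_add]
  map_smul' r v := by
    show (dcAux p a (r • v) * cAux p b + cAux p a * dcAux p b (r • v)).coeff k = _
    rw [dcAux_smul, dcAux_smul,
      show (r • dcAux p a v) * cAux p b + cAux p a * (r • dcAux p b v)
        = r • (dcAux p a v * cAux p b + cAux p a * dcAux p b v) from by
          rw [smul_eq_C_mul, smul_eq_C_mul, smul_eq_C_mul]; ring, coeff_smul]
    simp

def dHL (p : EEs d) (k : ℕ) : EEs d →ₗ[ℂ] ℂ where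
  toFun v := (dHAux p v).coeff k
  map_add' v w := by
    show (dHAux p (v + w)).coeff k = _
    rw [dHAux_add, coeff_add]
  map_smul' r v := by
    show (dHAux p (r • v)).coeff k = _
    rw [dHAux_smul, coeff_smul]
    simp

lemma hasFDerivAt_ccoeff (p : EEs d) (i : Fin 5) (k : ℕ) :
    HasFDerivAt (fun q : EEs d => (C (q.2 i) * ∏ j, (X - C (q.1 i j))).coeff k)
      (LinearMap.toContinuousLinearMap (dcL p i k)) p := by
  have h1 : HasFDerivAt (fun q : EEs d => q.2 i)
      ((ContinuousLinearMap.proj i).comp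
        (ContinuousLinearMap.snd ℂ (Fin 5 → Fin d → ℂ) (Fin 5 → ℂ))) p :=
    by
      have h1' := (((ContinuousLinearMap.proj i).comp
        (ContinuousLinearMap.snd ℂ (Fin 5 → Fin d → ℂ) (Fin 5 → ℂ)))).hasFDerivAt (x := p)
      exact h1'
  have h2 : HasFDerivAt (fun q : EEs d => (∏ j, (X - C (q.1 i j))).coeff k)
      ((∑ j, (-(∏ m ∈ Finset.univ.erase j, (X - C (p.1 i m))).coeff k) •
        (ContinuousLinearMap.proj j : (Fin d → ℂ) →L[ℂ] ℂ)).comp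
        ((ContinuousLinearMap.proj i).comp
          (ContinuousLinearMap.fst ℂ (Fin 5 → Fin d → ℂ) (Fin 5 → ℂ)))) p :=
    by
      have h2' := (hasFDerivAt_prodcoeff Finset.univ k (p.1 i)).comp p
        (((ContinuousLinearMap.proj i).comp
          (ContinuousLinearMap.fst ℂ (Fin 5 → Fin d → ℂ) (Fin 5 → ℂ)))).hasFDerivAt
      exact h2'
  have h3 := h1.mul h2
  have hfun : (fun q : EEs d => (C (q.2 i) * ∏ j, (X - C (q.1 i j))).coeff k) =
      fun q : EEs d => q.2 i * (∏ j, (X - C (q.1 i j))).coeff k := by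
    funext q; rw [coeff_C_mul]
  rw [hfun]
  refine h3.congr_fderiv ?_
  apply ContinuousLinearMap.ext
  intro v
  simp only [LinearMap.coe_toContinuousLinearMap', dcL, LinearMap.coe_mk, AddHom.coe_mk,
    dcAux, coeff_sub, coeff_C_mul, dPaux, finset_sum_coeff,
    ContinuousLinearMap.add_apply, ContinuousLinearMap.smul_apply,
    ContinuousLinearMap.comp_apply, ContinuousLinearMap.sum_apply,
    ContinuousLinearMap.proj_apply, ContinuousLinearMap.coe_fst',
    ContinuousLinearMap.coe_snd', smul_eq_mul]
  have hsum : (∑ x : Fin d, -(∏ j ∈ Finset.univ.erase x, (X - C (p.1 i j))).coeff k * v.1 i x)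
      = -∑ x : Fin d, v.1 i x * (∏ j ∈ Finset.univ.erase x, (X - C (p.1 i j))).coeff k := by
    rw [← Finset.sum_neg_distrib]
    exact Finset.sum_congr rfl fun j _ => by ring
  rw [hsum]
  ring

lemma hasFDerivAt_mulcoeff (p : EEs d) (a b : Fin 5) (k : ℕ) :
    HasFDerivAt (fun q : EEs d =>
        ((C (q.2 a) * ∏ j, (X - C (q.1 a j))) * (C (q.2 b) * ∏ j, (X - C (q.1 b j)))).coeff k)
      (LinearMap.toContinuousLinearMap (dmulL p a b k)) p := by
  have hfun : (fun q : EEs d =>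
      ((C (q.2 a) * ∏ j, (X - C (q.1 a j))) * (C (q.2 b) * ∏ j, (X - C (q.1 b j)))).coeff k)
      = fun q : EEs d => ∑ x ∈ Finset.HasAntidiagonal.antidiagonal k,
          (C (q.2 a) * ∏ j, (X - C (q.1 a j))).coeff x.1 *
          (C (q.2 b) * ∏ j, (X - C (q.1 b j))).coeff x.2 :=
    funext fun q => coeff_mul _ _ _
  rw [hfun]
  have h := HasFDerivAt.fun_sum (u := Finset.HasAntidiagonal.antidiagonal k)
    (fun x _ => (hasFDerivAt_ccoeff p a x.1).mul (hasFDerivAt_ccoeff p b x.2))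
  refine h.congr_fderiv ?_
  apply ContinuousLinearMap.ext
  intro v
  simp only [LinearMap.coe_toContinuousLinearMap', dmulL, dcL, LinearMap.coe_mk, AddHom.coe_mk,
    cAux, coeff_add, coeff_mul, ContinuousLinearMap.sum_apply, ContinuousLinearMap.add_apply,
    ContinuousLinearMap.smul_apply, smul_eq_mul]
  rw [← Finset.sum_add_distrib]
  exact Finset.sum_congr rfl fun x _ => by ring

lemma hasFDerivAt_coord (p : EEs d) (k : ℕ) :
    HasFDerivAt (fun q : EEs d =>
      ((C (q.2 1) * ∏ j, (X - C (q.1 1 j))) * (C (q.2 2) * ∏ j, (X - C (q.1 2 j))) +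
       (C (q.2 3) * ∏ j, (X - C (q.1 3 j))) * (C (q.2 4) * ∏ j, (X - C (q.1 4 j)))).coeff k)
      (LinearMap.toContinuousLinearMap (dHL p k)) p := by
  have hfun : (fun q : EEs d =>
      ((C (q.2 1) * ∏ j, (X - C (q.1 1 j))) * (C (q.2 2) * ∏ j, (X - C (q.1 2 j))) +
       (C (q.2 3) * ∏ j, (X - C (q.1 3 j))) * (C (q.2 4) * ∏ j, (X - C (q.1 4 j)))).coeff k)
      = fun q : EEs d =>
      ((C (q.2 1) * ∏ j, (X - C (q.1 1 j))) * (C (q.2 2) * ∏ j, (X - C (q.1 2 j)))).coeff k +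
      ((C (q.2 3) * ∏ j, (X - C (q.1 3 j))) * (C (q.2 4) * ∏ j, (X - C (q.1 4 j)))).coeff k :=
    funext fun q => coeff_add _ _ _
  rw [hfun]
  have h := (hasFDerivAt_mulcoeff p 1 2 k).add (hasFDerivAt_mulcoeff p 3 4 k)
  refine h.congr_fderiv ?_
  apply ContinuousLinearMap.ext
  intro v
  simp only [LinearMap.coe_toContinuousLinearMap', dHL, dmulL, LinearMap.coe_mk, AddHom.coe_mk,
    ContinuousLinearMap.add_apply, dHAux, coeff_add]

def LAc (d : ℕ) : EEs d →L[ℂ] (Fin 3 → Fin d → ℂ) :=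
  ContinuousLinearMap.pi fun i => (ContinuousLinearMap.proj (Fin.castLE (by norm_num) i)).comp
    (ContinuousLinearMap.fst ℂ (Fin 5 → Fin d → ℂ) (Fin 5 → ℂ))

def LDf (p : EEs d) : EEs d →L[ℂ] ((Fin 3 → Fin d → ℂ) × (Fin 5 → ℂ) × (Fin (2*d) → ℂ)) :=
  (LAc d).prod ((ContinuousLinearMap.snd ℂ (Fin 5 → Fin d → ℂ) (Fin 5 → ℂ)).prod
    (ContinuousLinearMap.pi fun k : Fin (2*d) => LinearMap.toContinuousLinearMap (dHL p (k : ℕ))))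

lemma hasFDerivAt_full (p : EEs d) :
    HasFDerivAt (fun q : EEs d =>
      ((fun i : Fin 3 => q.1 (Fin.castLE (by norm_num) i),
        q.2,
        fun k : Fin (2*d) =>
          ((C (q.2 1) * ∏ j, (X - C (q.1 1 j))) * (C (q.2 2) * ∏ j, (X - C (q.1 2 j))) +
           (C (q.2 3) * ∏ j, (X - C (q.1 3 j))) * (C (q.2 4) * ∏ j, (X - C (q.1 4 j)))).coeff
             (k : ℕ)) :
        (Fin 3 → Fin d → ℂ) × (Fin 5 → ℂ) × (Fin (2*d) → ℂ)))
      (LDf p) p := by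
  apply HasFDerivAt.prodMk
  · have h := (LAc d).hasFDerivAt (x := p)
    exact h
  apply HasFDerivAt.prodMk
  · have h := (ContinuousLinearMap.snd ℂ (Fin 5 → Fin d → ℂ) (Fin 5 → ℂ)).hasFDerivAt (x := p)
    exact h
  · apply hasFDerivAt_pi''
    intro k
    rw [ContinuousLinearMap.proj_pi]
    exact hasFDerivAt_coord p (k : ℕ)

lemma natDegree_prodlin_le (s : Finset (Fin d)) (x : Fin d → ℂ) :
    (∏ j ∈ s, (X - C (x j)) : ℂ[X]).natDegree ≤ s.card := by
  refine le_trans (Polynomial.natDegree_prod_le _ _) ?_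
  simp [natDegree_X_sub_C]

lemma natDegree_dPaux_le (x δ : Fin d → ℂ) : (dPaux x δ).natDegree ≤ d - 1 := by
  refine Polynomial.natDegree_sum_le_of_forall_le _ _ fun j _ => ?_
  refine le_trans (Polynomial.natDegree_C_mul_le _ _) ?_
  refine le_trans (natDegree_prodlin_le _ _) ?_
  simp [Finset.card_erase_of_mem]

lemma degree_Pr (x : Fin d → ℂ) : (∏ j, (X - C (x j)) : ℂ[X]).degree = (d : ℕ) := by
  rw [Polynomial.degree_prod]
  simp [degree_X_sub_C]

lemma degree_dPaux_lt (hd : 1 ≤ d) (x δ : Fin d → ℂ) :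
    (dPaux x δ).degree < ((d : ℕ) : WithBot ℕ) := by
  rcases eq_or_ne (dPaux x δ) 0 with h | h
  · rw [h, degree_zero]
    exact WithBot.bot_lt_coe _
  · rw [Polynomial.degree_eq_natDegree h]
    exact_mod_cast lt_of_le_of_lt (natDegree_dPaux_le x δ) (by omega)

lemma dPaux_eq_zero_iff {x : Fin d → ℂ} (hx : Function.Injective x) {δ : Fin d → ℂ}
    (h : dPaux x δ = 0) : δ = 0 := by
  funext m
  have h1 := congrArg (eval (x m)) h
  simp only [dPaux, eval_finset_sum, eval_mul, eval_C, eval_prod, eval_sub, eval_X,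
    eval_zero] at h1
  rw [Finset.sum_eq_single m (fun j _ hj => ?_) (fun hm => absurd (Finset.mem_univ m) hm)] at h1
  · rcases mul_eq_zero.1 h1 with h2 | h2
    · exact h2
    · exfalso
      refine (Finset.prod_ne_zero_iff.mpr fun m' hm' => ?_) h2
      refine sub_ne_zero.mpr fun heq => ?_
      exact (Finset.mem_erase.1 hm').1 (hx heq.symm)
  · refine mul_eq_zero_of_right _ (Finset.prod_eq_zero (i := m) ?_ (by rw [sub_self]))
    exact Finset.mem_erase.2 ⟨fun hmj => hj hmj.symm, Finset.mem_univ _⟩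

lemma coprime_Pr {x z : Fin d → ℂ} (hxz : ∀ j m, x j ≠ z m) :
    IsCoprime (∏ j, (X - C (x j)) : ℂ[X]) (∏ j, (X - C (z j))) := by
  refine IsCoprime.prod_left fun j _ => IsCoprime.prod_right fun m _ => ?_
  exact Polynomial.isCoprime_X_sub_C_of_isUnit_sub (IsUnit.mk0 _ (sub_ne_zero.mpr (hxz j m)))

lemma LDf_injective (hd : 1 ≤ d) (θ : Fin 5 → Fin d → ℂ) (y : Fin 5 → ℂ)
    (hy3 : y 3 ≠ 0) (hy4 : y 4 ≠ 0)
    (hθ : Function.Injective (fun p : Fin 5 × Fin d => θ p.1 p.2)) :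
    Function.Injective ⇑(LDf ((θ, y) : EEs d)) := by
  rw [injective_iff_map_eq_zero]
  intro v hv
  simp only [LDf, ContinuousLinearMap.prod_apply, Prod.mk_eq_zero] at hv
  obtain ⟨hA, hB, hC⟩ := hv
  -- first components
  have hA' : ∀ i : Fin 3, v.1 (Fin.castLE (by norm_num) i) = 0 := by
    intro i
    have := congrFun hA i
    simpa [LAc] using this
  have hB' : v.2 = 0 := by simpa using hB
  have hC' : ∀ k : Fin (2 * d), (dHAux ((θ, y) : EEs d) v).coeff (k : ℕ) = 0 := by
    intro k
    have := congrFun hC k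
    simpa [LinearMap.coe_toContinuousLinearMap', dHL] using this
  have hv0 : v.1 0 = 0 := hA' 0
  have hv1 : v.1 1 = 0 := hA' 1
  have hv2 : v.1 2 = 0 := hA' 2
  have hy2 : ∀ i : Fin 5, v.2 i = 0 := fun i => congrFun hB' i
  -- the four directional derivative polynomials
  have hdc1 : dcAux ((θ, y) : EEs d) 1 v = 0 := by
    simp [dcAux, hy2 1, hv1, dPaux_zero]
  have hdc2 : dcAux ((θ, y) : EEs d) 2 v = 0 := by
    simp [dcAux, hy2 2, hv2, dPaux_zero]
  have hdc3 : dcAux ((θ, y) : EEs d) 3 v = -(C (y 3) * dPaux (θ 3) (v.1 3)) := by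
    simp [dcAux, hy2 3]
  have hdc4 : dcAux ((θ, y) : EEs d) 4 v = -(C (y 4) * dPaux (θ 4) (v.1 4)) := by
    simp [dcAux, hy2 4]
  set P3 : ℂ[X] := ∏ j, (X - C (θ 3 j)) with hP3
  set P4 : ℂ[X] := ∏ j, (X - C (θ 4 j)) with hP4
  set q3 : ℂ[X] := dPaux (θ 3) (v.1 3) with hq3def
  set q4 : ℂ[X] := dPaux (θ 4) (v.1 4) with hq4def
  have hc3 : cAux ((θ, y) : EEs d) 3 = C (y 3) * P3 := rfl
  have hc4 : cAux ((θ, y) : EEs d) 4 = C (y 4) * P4 := rfl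
  have hdHeq : dHAux ((θ, y) : EEs d) v =
      -(C (y 3) * q3 * (C (y 4) * P4)) - C (y 3) * P3 * (C (y 4) * q4) := by
    rw [dHAux, hdc1, hdc2, hdc3, hdc4, hc3, hc4]
    ring
  -- degree bound
  have hPrcard : ∀ x : Fin d → ℂ, ((∏ j, (X - C (x j)) : ℂ[X])).natDegree ≤ d := by
    intro x
    refine le_trans (natDegree_prodlin_le Finset.univ x) ?_
    simp
  have hbound : (dHAux ((θ, y) : EEs d) v).natDegree ≤ 2 * d - 1 := by
    rw [hdHeq]
    refine le_trans (natDegree_sub_le _ _) (max_le ?_ ?_)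
    · rw [natDegree_neg]
      refine le_trans (natDegree_mul_le) ?_
      have h1 : (C (y 3) * q3).natDegree ≤ d - 1 :=
        le_trans (natDegree_C_mul_le _ _) (natDegree_dPaux_le _ _)
      have h2 : (C (y 4) * P4).natDegree ≤ d :=
        le_trans (natDegree_C_mul_le _ _) (hPrcard _)
      omega
    · refine le_trans (natDegree_mul_le) ?_
      have h1 : (C (y 3) * P3).natDegree ≤ d :=
        le_trans (natDegree_C_mul_le _ _) (hPrcard _)
      have h2 : (C (y 4) * q4).natDegree ≤ d - 1 :=
        le_trans (natDegree_C_mul_le _ _) (natDegree_dPaux_le _ _)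
      omega
  have hdH : dHAux ((θ, y) : EEs d) v = 0 := by
    apply Polynomial.ext
    intro n
    rw [coeff_zero]
    by_cases hn : n < 2 * d
    · exact hC' ⟨n, hn⟩
    · exact coeff_eq_zero_of_natDegree_lt (lt_of_le_of_lt hbound (by omega))
  have heq0 : -(C (y 3) * q3 * (C (y 4) * P4)) - C (y 3) * P3 * (C (y 4) * q4) = 0 := by
    rw [← hdHeq]; exact hdH
  -- coprimality
  have hcop : IsCoprime P3 P4 := by
    refine coprime_Pr fun j m heq => ?_
    have h35 := hθ (a₁ := (3, j)) (a₂ := (4, m)) heq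
    simpa using congrArg Prod.fst h35
  have hrow : ∀ i : Fin 5, Function.Injective (θ i) := by
    intro i a b hab
    have := hθ (a₁ := (i, a)) (a₂ := (i, b)) hab
    simpa using congrArg Prod.snd this
  have hne34 : y 3 * y 4 ≠ 0 := mul_ne_zero hy3 hy4
  -- q3 = 0
  have hdvd3 : P3 ∣ (C (y 3) * q3 * C (y 4)) * P4 :=
    ⟨-(C (y 3) * (C (y 4) * q4)), by linear_combination -heq0⟩
  have hdvd3' : P3 ∣ C (y 3) * q3 * C (y 4) := hcop.dvd_of_dvd_mul_right hdvd3
  have hq3dvd : P3 ∣ q3 := by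
    have hrw : q3 = C ((y 3 * y 4)⁻¹) * (C (y 3) * q3 * C (y 4)) := by
      rw [show C (y 3) * q3 * C (y 4) = C (y 3 * y 4) * q3 from by rw [C_mul]; ring,
        ← mul_assoc, ← C_mul, inv_mul_cancel₀ hne34, C_1, one_mul]
    rw [hrw]
    exact hdvd3'.mul_left _
  have hq3 : q3 = 0 := by
    refine Polynomial.eq_zero_of_dvd_of_degree_lt hq3dvd ?_
    rw [hP3, degree_Pr]
    exact degree_dPaux_lt hd _ _
  -- q4 = 0
  have hdvd4 : P4 ∣ (C (y 4) * q4 * C (y 3)) * P3 :=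
    ⟨-(C (y 4) * (C (y 3) * q3)), by linear_combination -heq0⟩
  have hdvd4' : P4 ∣ C (y 4) * q4 * C (y 3) := hcop.symm.dvd_of_dvd_mul_right hdvd4
  have hq4dvd : P4 ∣ q4 := by
    have hrw : q4 = C ((y 3 * y 4)⁻¹) * (C (y 4) * q4 * C (y 3)) := by
      rw [show C (y 4) * q4 * C (y 3) = C (y 3 * y 4) * q4 from by rw [C_mul]; ring,
        ← mul_assoc, ← C_mul, inv_mul_cancel₀ hne34, C_1, one_mul]
    rw [hrw]
    exact hdvd4'.mul_left _
  have hq4 : q4 = 0 := by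
    refine Polynomial.eq_zero_of_dvd_of_degree_lt hq4dvd ?_
    rw [hP4, degree_Pr]
    exact degree_dPaux_lt hd _ _
  have hv3 : v.1 3 = 0 := dPaux_eq_zero_iff (hrow 3) hq3
  have hv4 : v.1 4 = 0 := dPaux_eq_zero_iff (hrow 4) hq4
  have hfst : v.1 = 0 := by
    funext i
    fin_cases i
    · exact hv0
    · exact hv1
    · exact hv2
    · exact hv3
    · exact hv4
  exact Prod.ext hfst hB'

lemma finrank_eq_aux (d : ℕ) :
    Module.finrank ℂ (EEs d) =
      Module.finrank ℂ ((Fin 3 → Fin d → ℂ) × (Fin 5 → ℂ) × (Fin (2 * d) → ℂ)) := by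
  simp [Module.finrank_prod, Module.finrank_pi, Module.finrank_pi_fintype,
    Finset.sum_const, Fintype.card_fin, smul_eq_mul]
  ring

end Stmt2Aux

/-- Proposition 3.1(b) of the paper, via coefficients.
With `c^i(t) = r_i ∏_j (t − θ_i^j)` and `h = c^1 c^2 + c^3 c^4`, the map
`G'(θ, r) = (θ₀, θ₁, θ₂, r₀, …, r₄, (coeff₀(h), …, coeff_{2d−1}(h)))` (all
coefficients of `h` except the leading one) has bijective Fréchet derivative
over `ℂ` at a point `(θ̃, y)` satisfying the listed genericity conditions. -/
theorem stmt2 (d : ℕ) (hd : 1 ≤ d)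
    (θ : Fin 5 → Fin d → ℂ) (y : Fin 5 → ℂ)
    (c : Fin 5 → Polynomial ℂ)
    (hc : ∀ i, c i = Polynomial.C (y i) * ∏ j, (Polynomial.X - Polynomial.C (θ i j)))
    (h : Polynomial ℂ)
    (hh : h = c 1 * c 2 + c 3 * c 4)
    (hy : ∀ i, y i ≠ 0)
    (hθ : Function.Injective (fun p : Fin 5 × Fin d => θ p.1 p.2))
    (hlead : y 1 * y 2 + y 3 * y 4 ≠ 0)
    (β : Fin (2 * d) → ℂ)
    (hβinj : Function.Injective β)
    (hβroot : ∀ i, h.eval (β i) = 0)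
    (hβ0 : ∀ i, β i ≠ 0)
    (hβ3 : ∀ i, (c 3).eval (β i) ≠ 0)
    (hβ4 : ∀ i, (c 4).eval (β i) ≠ 0)
    (hli : LinearIndependent ℂ ![c 3, c 4]) :
    Function.Bijective
      (fderiv ℂ
        (fun p : (Fin 5 → Fin d → ℂ) × (Fin 5 → ℂ) =>
          ((fun i : Fin 3 => p.1 (Fin.castLE (by norm_num) i),
            p.2,
            fun k : Fin (2 * d) =>
              ((Polynomial.C (p.2 1) * ∏ j, (Polynomial.X - Polynomial.C (p.1 1 j))) *
                  (Polynomial.C (p.2 2) * ∏ j, (Polynomial.X - Polynomial.C (p.1 2 j))) +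
                (Polynomial.C (p.2 3) * ∏ j, (Polynomial.X - Polynomial.C (p.1 3 j))) *
                  (Polynomial.C (p.2 4) * ∏ j, (Polynomial.X - Polynomial.C (p.1 4 j)))).coeff k) :
            (Fin 3 → Fin d → ℂ) × (Fin 5 → ℂ) × (Fin (2 * d) → ℂ)))
        (θ, y)) := by
  have hF := hasFDerivAt_full (d := d) ((θ, y) : EEs d)
  rw [hF.fderiv]
  have hinj : Function.Injective ⇑(LDf ((θ, y) : EEs d)) :=
    LDf_injective hd θ y (hy 3) (hy 4) hθ
  refine ⟨hinj, ?_⟩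
  have hinj' : Function.Injective
      ⇑((LDf ((θ, y) : EEs d)) : EEs d →ₗ[ℂ]
        (Fin 3 → Fin d → ℂ) × (Fin 5 → ℂ) × (Fin (2 * d) → ℂ)) := hinj
  exact (LinearMap.injective_iff_surjective_of_finrank_eq_finrank (finrank_eq_aux d)).1 hinj'
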